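/- Let X and Y be separable Hilbert spaces with Y compactly and densely embedded into X, and let (e_n) be an orthonormal basis of X contained in Y and simultaneously orthogonal in Y (as in the simultaneous diagonalization construction). Let π_N denote the X-orthogonal projection onto span{e_1,…,e_N}. Then sup over y in the unit ball of Y of ‖y − π_N y‖_X tends to 0 as N → ∞. -/

import Mathlib

open Filter

/-- Uniform approximation on the unit ball of `Y` by the `X`-orthogonal
projections onto the spans of the first `N` basis vectors. -/
theorem stmt1 {X Y : Type*}
    [NormedAddCommGroup X] [InnerProductSpace ℝ X] [CompleteSpace X]
    [TopologicalSpace.SeparableSpace X]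
    [NormedAddCommGroup Y] [InnerProductSpace ℝ Y] [CompleteSpace Y]
    [TopologicalSpace.SeparableSpace Y]
    (ι : Y →L[ℝ] X) (hinj : Function.Injective ι)
    (hcomp : IsCompactOperator ι) (hdense : DenseRange ι)
    (e : ℕ → Y)
    (he1 : Orthonormal ℝ (fun n => ι (e n)))
    (he2 : (Submodule.span ℝ (Set.range fun n => ι (e n))).topologicalClosure = ⊤)
    (he3 : ∀ n m, n ≠ m → @inner ℝ Y _ (e n) (e m) = 0) :
    Tendsto
      (fun N : ℕ =>
        ⨆ y : {y : Y // ‖y‖ ≤ 1},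
          Metric.infDist (ι y)
            ((Submodule.span ℝ ((fun n => ι (e n)) '' Set.Iio N) : Submodule ℝ X) : Set X))
      atTop (nhds 0) := by
  set V : ℕ → Submodule ℝ X :=
    fun N => Submodule.span ℝ ((fun n => ι (e n)) '' Set.Iio N) with hV
  have hVmono : Monotone V := fun a b hab =>
    Submodule.span_mono (Set.image_mono (Set.Iio_subset_Iio hab))
  have hVne : ∀ N, ((V N : Set X)).Nonempty := fun N => ⟨0, (V N).zero_mem⟩
  set f : ℕ → X → ℝ := fun N x => Metric.infDist x (V N) with hf
  have hfanti : ∀ x : X, ∀ ⦃a b : ℕ⦄, a ≤ b → f b x ≤ f a x := by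
    intro x a b hab
    exact Metric.infDist_le_infDist_of_subset (hVmono hab) (hVne a)
  -- pointwise convergence on all of X
  have hpt : ∀ (x : X) (ε : ℝ), 0 < ε → ∃ N, f N x < ε := by
    intro x ε hε
    have hx : x ∈ closure ((Submodule.span ℝ (Set.range fun n => ι (e n)) : Set X)) := by
      have : x ∈ (Submodule.span ℝ (Set.range fun n => ι (e n))).topologicalClosure := by
        rw [he2]; trivial
      exact this
    obtain ⟨v, hv, hvd⟩ := Metric.mem_closure_iff.mp hx ε hε
    have hvsup : v ∈ ⨆ N, V N := by
      have h1 : Submodule.span ℝ (Set.range fun n => ι (e n)) ≤ ⨆ N, V N := by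
        rw [Submodule.span_le]
        rintro _ ⟨n, rfl⟩
        refine Submodule.mem_iSup_of_mem (n + 1) ?_
        exact Submodule.subset_span ⟨n, by simp, rfl⟩
      exact h1 hv
    obtain ⟨N, hvN⟩ := (Submodule.mem_iSup_of_directed _ hVmono.directed_le).mp hvsup
    exact ⟨N, lt_of_le_of_lt (Metric.infDist_le_dist_of_mem hvN) hvd⟩
  -- sup notation
  set g : ℕ → ℝ := fun N => ⨆ y : {y : Y // ‖y‖ ≤ 1}, f N (ι y) with hg
  haveI : Nonempty {y : Y // ‖y‖ ≤ 1} := ⟨⟨0, by simp⟩⟩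
  have hgnonneg : ∀ N, 0 ≤ g N := fun N =>
    Real.iSup_nonneg fun y => Metric.infDist_nonneg
  have hbdd : ∀ N, BddAbove (Set.range fun y : {y : Y // ‖y‖ ≤ 1} => f N (ι y)) := by
    intro N
    refine ⟨‖ι‖, ?_⟩
    rintro _ ⟨y, rfl⟩
    calc f N (ι y) ≤ dist (ι y) 0 := Metric.infDist_le_dist_of_mem (V N).zero_mem
    _ = ‖ι (y : Y)‖ := by simp
    _ ≤ ‖ι‖ * ‖(y : Y)‖ := ι.le_opNorm _
    _ ≤ ‖ι‖ * 1 := by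
        exact mul_le_mul_of_nonneg_left y.2 (norm_nonneg _)
    _ = ‖ι‖ := mul_one _
  have hganti : Antitone g := by
    intro a b hab
    exact ciSup_mono (hbdd a) fun y => hfanti _ hab
  -- main estimate
  have hmain : ∀ ε : ℝ, 0 < ε → ∃ N, g N < ε := by
    intro ε hε
    have hε3 : 0 < ε / 3 := by linarith
    -- compactness / total boundedness of the image of the unit ball
    have hK : IsCompact (closure (⇑ι '' Metric.closedBall 0 1)) :=
      IsCompactOperator.isCompact_closure_image_closedBall (f := (ι : Y →ₗ[ℝ] X))
        (𝕜₁ := ℝ) hcomp 1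
    have hTB : TotallyBounded (⇑ι '' Metric.closedBall (0 : Y) 1) :=
      hK.totallyBounded.subset subset_closure
    obtain ⟨t, htfin, htcov⟩ := (Metric.totallyBounded_iff.mp hTB) (ε / 3) hε3
    choose! F hF using hpt
    set N : ℕ := htfin.toFinset.sup fun c => F c (ε / 3) with hN
    refine ⟨N, ?_⟩
    have hterm : ∀ y : {y : Y // ‖y‖ ≤ 1}, f N (ι y) ≤ 2 * ε / 3 := by
      intro y
      have hmem : ι (y : Y) ∈ ⇑ι '' Metric.closedBall (0 : Y) 1 :=
        ⟨y, by simpa using y.2, rfl⟩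
      obtain ⟨c, hct, hcd⟩ := Set.mem_iUnion₂.mp (htcov hmem)
      have hcd' : dist (ι (y : Y)) c < ε / 3 := Metric.mem_ball.mp hcd
      have hcN : f N c < ε / 3 := by
        have hle : F c (ε / 3) ≤ N :=
          Finset.le_sup (f := fun c => F c (ε / 3)) (htfin.mem_toFinset.mpr hct)
        exact lt_of_le_of_lt (hfanti c hle) (hF c (ε / 3) hε3)
      calc f N (ι (y : Y)) ≤ f N c + dist (ι (y : Y)) c :=
            Metric.infDist_le_infDist_add_dist
      _ ≤ ε / 3 + ε / 3 := by linarith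
      _ ≤ 2 * ε / 3 := by linarith
    exact lt_of_le_of_lt (ciSup_le hterm) (by linarith)
  -- conclude
  rw [Metric.tendsto_atTop]
  intro ε hε
  obtain ⟨N, hN⟩ := hmain ε hε
  refine ⟨N, fun n hn => ?_⟩
  rw [Real.dist_eq, sub_zero, abs_of_nonneg (hgnonneg n)]
  exact lt_of_le_of_lt (hganti hn) hN
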